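/- Let N_φ, N_ψ ∈ ℂ, φₙ(x) = (N_φ/(2ⁿ √(n!))) Hₙ(sinh x) e^{−cosh²x}, ψₙ(x) = (2N_ψ/√(n!)) Hₙ(sinh x) cosh x. For h : ℝ → ℂ set h_{[−]}(s) = h(arsinh s) e^{s²/2}, h_{[+]}(s) = h(arsinh s) e^{−s²/2}/√(1+s²), and E_c = { h ∈ L²(ℝ) : h_{[−]} ∈ L²(ℝ) }. Then for every g ∈ E_c and every n ≥ 0: |∫_ℝ conj(g) φₙ dx| ≤ (|N_φ| π^{1/4}/(2^{n/2} e)) ‖g_{[+]}‖₂ and |∫_ℝ conj(ψₙ) g dx| ≤ 2 |N_ψ| 2^{n/2} π^{1/4} ‖g_{[−]}‖₂; consequently, for every z ∈ ℂ the series Σ_{n≥0} (z̄ⁿ/√(n!)) ∫_ℝ conj(φₙ) g dx and Σ_{n≥0} (z̄ⁿ/√(n!)) ∫_ℝ conj(ψₙ) g dx converge absolutely. -/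

import Mathlib

open MeasureTheory

/-- The physicist's Hermite polynomials:
`H₀(y) = 1`, `Hₙ(y) = 2y H_{n−1}(y) − H_{n−1}′(y)`. -/
noncomputable def hermiteH : ℕ → ℝ → ℝ
  | 0 => fun _ => 1
  | n + 1 => fun y => 2 * y * hermiteH n y - deriv (hermiteH n) y

/-- `h_{[−]}(s) = h(arsinh s) e^{s²/2}`. -/
noncomputable def minusT (h : ℝ → ℂ) : ℝ → ℂ :=
  fun s => h (Real.arsinh s) * (Real.exp (s ^ 2 / 2) : ℂ)

/-- `h_{[+]}(s) = h(arsinh s) e^{−s²/2}/√(1+s²)`. -/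
noncomputable def plusT (h : ℝ → ℂ) : ℝ → ℂ :=
  fun s => h (Real.arsinh s) * (Real.exp (-s ^ 2 / 2) : ℂ) / (Real.sqrt (1 + s ^ 2) : ℂ)

/-- `E_c = { h ∈ L² : h_{[−]} ∈ L² }`. -/
def Ec : Set (ℝ → ℂ) :=
  {h | MemLp h 2 (volume : Measure ℝ) ∧ MemLp (minusT h) 2 (volume : Measure ℝ)}

open Real Filter Polynomial
open scoped ENNReal NNReal

noncomputable def hP : ℕ → Polynomial ℝ
  | 0 => 1
  | n + 1 => 2 * Polynomial.X * hP n - (hP n).derivative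

lemma hermiteH_eq (n : ℕ) : hermiteH n = fun y => (hP n).eval y := by
  induction n with
  | zero => simp [hermiteH, hP]
  | succ n ih =>
    funext y
    simp only [hermiteH, hP, ih, Polynomial.deriv]
    simp [Polynomial.eval_mul]

lemma hP_derivative (n : ℕ) :
    (hP (n + 1)).derivative = Polynomial.C (2 * (n + 1) : ℝ) * hP n := by
  induction n with
  | zero =>
    simp [hP]
    exact (map_ofNat Polynomial.C 2).symm
  | succ n ih =>
    show (2 * Polynomial.X * hP (n+1) - (hP (n+1)).derivative).derivative = _
    rw [derivative_sub, derivative_mul, derivative_mul, ih]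
    simp only [derivative_ofNat, derivative_X, derivative_C, mul_one, zero_mul, zero_add]
    have : hP (n + 2) = 2 * Polynomial.X * hP (n+1) - (hP (n+1)).derivative := rfl
    rw [derivative_mul, derivative_C, zero_mul, zero_add]
    have h1 : (2 * Polynomial.X * hP n - (hP n).derivative) = hP (n+1) := rfl
    rw [show (2:ℝ[X]) * hP (n + 1) + 2 * X * (C (2 * ((n:ℝ) + 1)) * hP n) - C (2 * ((n:ℝ) + 1)) * (hP n).derivative =
      2 * hP (n+1) + C (2*((n:ℝ)+1)) * (2 * X * hP n - (hP n).derivative) by ring, h1]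
    rw [show (2:ℝ[X]) * hP (n+1) + C (2*((n:ℝ)+1)) * hP (n+1) = (2 + C (2*((n:ℝ)+1))) * hP (n+1) by ring]
    congr 1
    rw [show ((2:ℝ[X])) = C (2:ℝ) from (map_ofNat Polynomial.C 2).symm, ← Polynomial.C_add]
    congr 1
    push_cast
    ring

lemma tendsto_poly_gauss_atTop (p : ℝ[X]) {c : ℝ} (hc : 0 < c) :
    Tendsto (fun x => p.eval x * Real.exp (-c * x ^ 2)) atTop (nhds 0) := by
  have h1 : Tendsto (fun x => p.eval x / Real.exp x) atTop (nhds 0) :=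
    p.tendsto_div_exp_atTop
  have h2 : Tendsto (fun x : ℝ => Real.exp (x - c * x ^ 2)) atTop (nhds 0) := by
    apply Real.tendsto_exp_atBot.comp
    have : Tendsto (fun x : ℝ => x * (1 - c * x)) atTop atBot := by
      apply Tendsto.atTop_mul_atBot₀ tendsto_id
      apply tendsto_atBot_add_const_left
      exact (Tendsto.const_mul_atTop_of_neg (neg_lt_zero.mpr hc) tendsto_id).congr (fun x => by simp)
    refine this.congr' ?_
    filter_upwards with x
    ring
  have := h1.mul h2
  rw [mul_zero] at this
  refine this.congr ?_
  intro x
  rw [div_mul_eq_mul_div, mul_div_assoc, ← Real.exp_sub]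
  congr 2
  ring

lemma tendsto_poly_gauss_atBot (p : ℝ[X]) {c : ℝ} (hc : 0 < c) :
    Tendsto (fun x => p.eval x * Real.exp (-c * x ^ 2)) atBot (nhds 0) := by
  have := (tendsto_poly_gauss_atTop (p.comp (-Polynomial.X)) hc).comp tendsto_neg_atBot_atTop
  refine this.congr ?_
  intro x
  simp [Function.comp, Polynomial.eval_comp]

lemma poly_gauss_bound (p : ℝ[X]) {c : ℝ} (hc : 0 < c) :
    ∃ M : ℝ, ∀ x : ℝ, |p.eval x * Real.exp (-c * x ^ 2)| ≤ M := by
  set f := fun x => p.eval x * Real.exp (-c * x ^ 2) with hf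
  have hcont : Continuous f :=
    (Polynomial.continuous p).mul (Real.continuous_exp.comp (continuous_const.mul (continuous_pow 2)))
  have h1 : ∀ᶠ x in atTop, |f x| ≤ 1 := by
    have := (tendsto_poly_gauss_atTop p hc).abs
    rw [abs_zero] at this
    exact this.eventually_le_const (by norm_num : (0:ℝ) < 1)
  have h2 : ∀ᶠ x in atBot, |f x| ≤ 1 := by
    have := (tendsto_poly_gauss_atBot p hc).abs
    rw [abs_zero] at this
    exact this.eventually_le_const (by norm_num : (0:ℝ) < 1)
  obtain ⟨A, hA⟩ := h1.exists_forall_of_atTop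
  obtain ⟨B, hB⟩ := h2.exists_forall_of_atBot
  obtain ⟨M₀, hM₀⟩ := (isCompact_Icc (a := B) (b := A)).exists_bound_of_continuousOn
    (hcont.abs.continuousOn)
  refine ⟨max M₀ 1, fun x => ?_⟩
  rcases le_total x A with hxA | hxA
  · rcases le_total B x with hBx | hBx
    · have h := hM₀ x ⟨hBx, hxA⟩; rw [Real.norm_eq_abs, abs_abs] at h; exact le_trans h (le_max_left _ _)
    · exact le_trans (hB x hBx) (le_max_right _ _)
  · exact le_trans (hA x hxA) (le_max_right _ _)

lemma integrable_poly_gauss (p : ℝ[X]) {c : ℝ} (hc : 0 < c) :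
    Integrable (fun x => p.eval x * Real.exp (-c * x ^ 2)) := by
  obtain ⟨M, hM⟩ := poly_gauss_bound p (half_pos hc)
  have hint : Integrable (fun x : ℝ => M * Real.exp (-(c/2) * x ^ 2)) :=
    (integrable_exp_neg_mul_sq (half_pos hc)).const_mul M
  have hcont : Continuous (fun x => p.eval x * Real.exp (-c * x ^ 2)) :=
    (Polynomial.continuous p).mul (Real.continuous_exp.comp (continuous_const.mul (continuous_pow 2)))
  refine hint.mono' hcont.aestronglyMeasurable ?_
  filter_upwards with x
  have : Real.exp (-c * x ^ 2) = Real.exp (-(c/2) * x ^ 2) * Real.exp (-(c/2) * x ^ 2) := by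
    rw [← Real.exp_add]; congr 1; ring
  rw [Real.norm_eq_abs, this, ← mul_assoc, abs_mul, abs_of_pos (Real.exp_pos _)]
  exact mul_le_mul_of_nonneg_right (hM x) (Real.exp_pos _).le

lemma integrable_poly_gauss' (p : ℝ[X]) :
    Integrable (fun x => p.eval x * Real.exp (-x ^ 2)) := by
  have := integrable_poly_gauss p (by norm_num : (0:ℝ) < 1)
  refine this.congr ?_
  filter_upwards with x
  norm_num

lemma hasDerivAt_poly_gauss (n : ℕ) (x : ℝ) :
    HasDerivAt (fun x => (hP n).eval x * Real.exp (-x ^ 2))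
      (-((hP (n+1)).eval x * Real.exp (-x ^ 2))) x := by
  have h1 : HasDerivAt (fun x : ℝ => Real.exp (-x ^ 2)) (Real.exp (-x ^ 2) * (-(2 * x))) x := by
    have hinner : HasDerivAt (fun x : ℝ => -x ^ 2) (-(2 * x)) x := by
      simpa using ((hasDerivAt_pow 2 x).fun_neg)
    exact (Real.hasDerivAt_exp (-x ^ 2)).comp x hinner
  have h2 := ((hP n).hasDerivAt x).fun_mul h1
  refine h2.congr_deriv ?_
  have : (hP (n+1)).eval x = 2 * x * (hP n).eval x - (hP n).derivative.eval x := by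
    show ((2 * Polynomial.X * hP n - (hP n).derivative).eval x) = _
    simp [Polynomial.eval_mul]
  rw [this]
  ring

noncomputable def gInt (n : ℕ) : ℝ := ∫ x : ℝ, (hP n).eval x ^ 2 * Real.exp (-x ^ 2)

lemma gInt_succ (n : ℕ) : gInt (n + 1) = 2 * (n + 1) * gInt n := by
  have key := integral_mul_deriv_eq_deriv_mul_of_integrable
    (u := fun x => (hP (n+1)).eval x)
    (u' := fun x => (hP (n+1)).derivative.eval x)
    (v := fun x => (hP n).eval x * Real.exp (-x ^ 2))
    (v' := fun x => -((hP (n+1)).eval x * Real.exp (-x ^ 2)))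
    (fun x _ => (hP (n+1)).hasDerivAt x)
    (fun x _ => hasDerivAt_poly_gauss n x)
    ?_ ?_ ?_
  · have lhs : (∫ x : ℝ, (hP (n+1)).eval x * -((hP (n+1)).eval x * Real.exp (-x ^ 2)))
        = -gInt (n+1) := by
      unfold gInt
      rw [← integral_neg]
      congr 1; funext x; ring
    have rhs : (∫ x : ℝ, (hP (n+1)).derivative.eval x * ((hP n).eval x * Real.exp (-x ^ 2)))
        = 2 * (n + 1) * gInt n := by
      unfold gInt
      rw [← integral_const_mul]
      congr 1; funext x
      rw [hP_derivative]
      simp [Polynomial.eval_mul]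
      ring
    have := key
    rw [lhs, rhs] at this
    linarith
  · have := (integrable_poly_gauss' (hP (n+1) * hP (n+1))).neg
    refine this.congr ?_
    filter_upwards with x
    simp [Polynomial.eval_mul]
    ring
  · have := integrable_poly_gauss' ((hP (n+1)).derivative * hP n)
    refine this.congr ?_
    filter_upwards with x
    simp [Polynomial.eval_mul]
    ring
  · have := integrable_poly_gauss' (hP (n+1) * hP n)
    refine this.congr ?_
    filter_upwards with x
    simp [Polynomial.eval_mul]
    ring

lemma gInt_eq (n : ℕ) : gInt n = 2 ^ n * n.factorial * Real.sqrt Real.pi := by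
  induction n with
  | zero =>
    unfold gInt
    have := integral_gaussian 1
    simp only [hP, Polynomial.eval_one, one_pow, one_mul]
    rw [show (∫ x : ℝ, Real.exp (-x ^ 2)) = ∫ x : ℝ, Real.exp (-1 * x ^ 2) by congr 1; funext x; norm_num]
    rw [this]
    simp
  | succ n ih =>
    rw [gInt_succ, ih]
    rw [Nat.factorial_succ]
    push_cast
    ring

lemma gInt_nonneg (n : ℕ) : 0 ≤ gInt n := by
  unfold gInt
  apply integral_nonneg
  intro x
  positivity

lemma sqrt_gInt (n : ℕ) :
    Real.sqrt (gInt n) = Real.sqrt 2 ^ n * Real.sqrt n.factorial * Real.pi ^ ((1:ℝ)/4) := by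
  rw [gInt_eq, Real.sqrt_mul (by positivity), Real.sqrt_mul (by positivity)]
  congr 1
  · congr 1
    rw [Real.sqrt_eq_rpow, ← Real.rpow_natCast (2:ℝ) n, ← Real.rpow_mul (by norm_num : (0:ℝ) ≤ 2),
      mul_comm, Real.rpow_mul (by norm_num : (0:ℝ) ≤ 2), Real.rpow_natCast, Real.sqrt_eq_rpow]
  · rw [Real.sqrt_eq_rpow, Real.sqrt_eq_rpow, ← Real.rpow_mul Real.pi_pos.le]
    norm_num

lemma cv_sinh (F : ℝ → ℂ) :
    (∫ s : ℝ, F s) = ∫ x : ℝ, Real.cosh x • F (Real.sinh x) := by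
  have h := integral_image_eq_integral_abs_deriv_smul (MeasurableSet.univ)
    (f := Real.sinh) (f' := Real.cosh)
    (fun x _ => (Real.hasDerivAt_sinh x).hasDerivWithinAt)
    (Real.sinh_injective.injOn) F
  rw [Set.image_univ, Real.sinh_surjective.range_eq] at h
  rw [MeasureTheory.setIntegral_univ] at h
  rw [MeasureTheory.setIntegral_univ] at h
  rw [h]
  congr 1; funext x
  rw [abs_of_pos (Real.cosh_pos x)]

lemma key_bound (c : ℂ) (n : ℕ) (G : ℝ → ℂ) (hG : MemLp G 2 (volume : Measure ℝ)) :
    ‖∫ s : ℝ, c * ((((hP n).eval s) : ℝ) : ℂ) * (Real.exp (-s ^ 2 / 2) : ℂ) * G s‖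
      ≤ ‖c‖ * Real.sqrt (gInt n) * (eLpNorm G 2 (volume : Measure ℝ)).toReal := by
  set w : ℝ → ℝ := fun s => ‖c‖ * |(hP n).eval s| * Real.exp (-s ^ 2 / 2) with hw
  have hw_nonneg : ∀ s, 0 ≤ w s := fun s => by positivity
  have hw_cont : Continuous w :=
    (continuous_const.mul (Polynomial.continuous (hP n)).abs).mul
      (Real.continuous_exp.comp (by continuity))
  have hnorm : ∀ s, ‖c * ((((hP n).eval s) : ℝ) : ℂ) * (Real.exp (-s ^ 2 / 2) : ℂ) * G s‖
      = w s * ‖G s‖ := by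
    intro s
    simp only [norm_mul, Complex.norm_real, Real.norm_eq_abs, hw]
    rw [abs_of_pos (Real.exp_pos _)]
  -- integrability of w^2
  have hw2_int : Integrable (fun s => w s ^ 2) := by
    have := (integrable_poly_gauss' (hP n * hP n)).const_mul (‖c‖ ^ 2)
    refine this.congr ?_
    filter_upwards with s
    simp only [hw, Polynomial.eval_mul]
    have hexp : Real.exp (-s ^ 2 / 2) ^ 2 = Real.exp (-s ^ 2) := by
      rw [sq, ← Real.exp_add]; ring_nf
    rw [mul_pow, mul_pow, hexp, sq_abs]
    ring
  have hw2_val : (∫ s, w s ^ 2) = ‖c‖ ^ 2 * gInt n := by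
    unfold gInt
    rw [← integral_const_mul]
    congr 1; funext s
    simp only [hw]
    have hexp : Real.exp (-s ^ 2 / 2) ^ 2 = Real.exp (-s ^ 2) := by
      rw [sq, ← Real.exp_add]; ring_nf
    rw [mul_pow, mul_pow, hexp, sq_abs]
    ring
  -- step 1
  refine le_trans (norm_integral_le_lintegral_norm _) ?_
  have hconj : Real.HolderConjugate 2 2 := Real.HolderConjugate.two_two
  have hf_meas : AEMeasurable (fun s => ENNReal.ofReal (w s)) (volume : Measure ℝ) :=
    (ENNReal.continuous_ofReal.comp hw_cont).measurable.aemeasurable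
  have hg_meas : AEMeasurable (fun s => (‖G s‖₊ : ℝ≥0∞)) (volume : Measure ℝ) :=
    hG.1.aemeasurable.nnnorm.coe_nnreal_ennreal
  have holder := ENNReal.lintegral_mul_le_Lp_mul_Lq (volume : Measure ℝ) hconj hf_meas hg_meas
  have heq : (∫⁻ s, ENNReal.ofReal
        ‖c * ((((hP n).eval s) : ℝ) : ℂ) * (Real.exp (-s ^ 2 / 2) : ℂ) * G s‖)
      = ∫⁻ s, ((fun s => ENNReal.ofReal (w s)) * fun s => (‖G s‖₊ : ℝ≥0∞)) s := by
    congr 1; funext s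
    rw [hnorm s, ENNReal.ofReal_mul (hw_nonneg s), ofReal_norm]
    rfl
  rw [heq]
  -- compute first Hölder factor
  have hpoint : ∀ s, ENNReal.ofReal (w s) ^ (2:ℝ) = ENNReal.ofReal (w s ^ 2) := fun s => by
    rw [ENNReal.ofReal_rpow_of_nonneg (hw_nonneg s) (by norm_num : (0:ℝ) ≤ 2)]
    norm_num [Real.rpow_natCast]
  have hfst : (∫⁻ s, ENNReal.ofReal (w s) ^ (2:ℝ)) = ENNReal.ofReal (‖c‖ ^ 2 * gInt n) := by
    rw [show (∫⁻ s, ENNReal.ofReal (w s) ^ (2:ℝ)) = ∫⁻ s, ENNReal.ofReal (w s ^ 2) from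
      lintegral_congr hpoint]
    rw [← ofReal_integral_eq_lintegral_ofReal hw2_int
      (Eventually.of_forall fun s => by positivity), hw2_val]
  have hsnd : (∫⁻ s, ((‖G s‖₊ : ℝ≥0∞)) ^ (2:ℝ)) ^ ((1:ℝ)/2)
      = eLpNorm G 2 (volume : Measure ℝ) := by
    rw [eLpNorm_eq_lintegral_rpow_enorm_toReal (p := 2) (by norm_num) (by norm_num)]
    norm_num
    rfl
  have hT : ((∫⁻ s, ENNReal.ofReal (w s) ^ (2:ℝ)) ^ ((1:ℝ)/2)
      * (∫⁻ s, ((‖G s‖₊ : ℝ≥0∞)) ^ (2:ℝ)) ^ ((1:ℝ)/2))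
      = ENNReal.ofReal (‖c‖ ^ 2 * gInt n) ^ ((1:ℝ)/2) * eLpNorm G 2 volume := by
    rw [hfst, hsnd]
  have hfin : ENNReal.ofReal (‖c‖ ^ 2 * gInt n) ^ ((1:ℝ)/2) * eLpNorm G 2 volume ≠ ⊤ :=
    ENNReal.mul_ne_top (by
      apply ENNReal.rpow_ne_top_of_nonneg (by norm_num)
      exact ENNReal.ofReal_ne_top) hG.eLpNorm_ne_top
  have hchain := le_trans holder (le_of_eq hT)
  refine le_trans (ENNReal.toReal_mono hfin hchain) (le_of_eq ?_)
  rw [ENNReal.toReal_mul, ← ENNReal.toReal_rpow,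
    ENNReal.toReal_ofReal (mul_nonneg (by positivity) (gInt_nonneg n))]
  rw [← Real.sqrt_eq_rpow, Real.sqrt_mul (sq_nonneg _), Real.sqrt_sq (norm_nonneg c)]

lemma norm_plusT_le (h : ℝ → ℂ) (s : ℝ) : ‖plusT h s‖ ≤ ‖minusT h s‖ := by
  simp only [plusT, minusT, norm_div, norm_mul, Complex.norm_real, Real.norm_eq_abs]
  rw [abs_of_pos (Real.exp_pos _), abs_of_pos (Real.exp_pos _),
    abs_of_nonneg (Real.sqrt_nonneg _)]
  have h1 : (1:ℝ) ≤ Real.sqrt (1 + s ^ 2) := by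
    nlinarith [Real.sq_sqrt (show (0:ℝ) ≤ 1 + s ^ 2 by positivity),
      Real.sqrt_nonneg (1 + s ^ 2)]
  have h2 : Real.exp (-s ^ 2 / 2) ≤ Real.exp (s ^ 2 / 2) :=
    Real.exp_le_exp.mpr (by nlinarith)
  calc ‖h (Real.arsinh s)‖ * Real.exp (-s ^ 2 / 2) / Real.sqrt (1 + s ^ 2)
      ≤ ‖h (Real.arsinh s)‖ * Real.exp (-s ^ 2 / 2) := by
        apply div_le_self (by positivity) h1
    _ ≤ ‖h (Real.arsinh s)‖ * Real.exp (s ^ 2 / 2) :=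
        mul_le_mul_of_nonneg_left h2 (norm_nonneg _)

lemma plusT_eq_mul (h : ℝ → ℂ) : plusT h = fun s =>
    minusT h s * ((Real.exp (-s ^ 2) / Real.sqrt (1 + s ^ 2) : ℝ) : ℂ) := by
  funext s
  simp only [plusT, minusT]
  have hexp : Real.exp (s ^ 2 / 2) * Real.exp (-s ^ 2) = Real.exp (-s ^ 2 / 2) := by
    rw [← Real.exp_add]; congr 1; ring
  push_cast
  rw [div_eq_mul_inv, div_eq_mul_inv, mul_assoc, mul_assoc]
  congr 1
  simp only [div_eq_mul_inv]
  rw [← mul_assoc, ← Complex.exp_add]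
  congr 2
  ring

lemma memLp_plusT (g : ℝ → ℂ) (hgm : MemLp (minusT g) 2 (volume : Measure ℝ)) :
    MemLp (plusT g) 2 (volume : Measure ℝ) := by
  have hasm : AEStronglyMeasurable (plusT g) (volume : Measure ℝ) := by
    rw [plusT_eq_mul]
    exact hgm.aestronglyMeasurable.mul
      ((Complex.continuous_ofReal.comp ((Real.continuous_exp.comp (by continuity)).div
        (Real.continuous_sqrt.comp (by continuity))
        (fun s => (Real.sqrt_pos.mpr (by positivity)).ne'))).aestronglyMeasurable)
  exact hgm.of_le hasm (Eventually.of_forall (norm_plusT_le g))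

lemma eLpNorm_conj (f : ℝ → ℂ) :
    eLpNorm (fun s => (starRingEnd ℂ) (f s)) 2 (volume : Measure ℝ)
      = eLpNorm f 2 (volume : Measure ℝ) :=
  le_antisymm (eLpNorm_mono_ae (Eventually.of_forall fun s => by
      rw [RCLike.norm_conj]))
    (eLpNorm_mono_ae (Eventually.of_forall fun s => by rw [RCLike.norm_conj]))

lemma norm_integral_conj_comm (f g : ℝ → ℂ) :
    ‖∫ x : ℝ, (starRingEnd ℂ) (f x) * g x‖ = ‖∫ x : ℝ, (starRingEnd ℂ) (g x) * f x‖ := by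
  rw [show (∫ x : ℝ, (starRingEnd ℂ) (f x) * g x)
      = (starRingEnd ℂ) (∫ x : ℝ, (starRingEnd ℂ) (g x) * f x) by
    rw [← integral_conj]; congr 1; funext x; simp [mul_comm]]
  exact RCLike.norm_conj _

lemma summable_aux (q : ℝ) (hq : 0 ≤ q) :
    Summable (fun n : ℕ => q ^ n / Real.sqrt n.factorial) := by
  apply summable_of_ratio_norm_eventually_le (r := 1/2) (by norm_num)
  rw [eventually_atTop]
  refine ⟨⌈(2 * q) ^ 2⌉₊, fun n hn => ?_⟩
  have hfac : (0:ℝ) < Real.sqrt n.factorial := Real.sqrt_pos.mpr (by positivity)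
  have hsq : 2 * q ≤ Real.sqrt (n + 1) := by
    have h1 : ((2 * q) ^ 2 : ℝ) ≤ (n + 1 : ℝ) := by
      calc ((2 * q) ^ 2 : ℝ) ≤ (⌈(2 * q) ^ 2⌉₊ : ℝ) := Nat.le_ceil _
        _ ≤ (n : ℝ) := by exact_mod_cast hn
        _ ≤ (n + 1 : ℝ) := by linarith
    calc 2 * q = Real.sqrt ((2 * q) ^ 2) := (Real.sqrt_sq (by positivity)).symm
      _ ≤ Real.sqrt (n + 1) := Real.sqrt_le_sqrt h1
  have hfs : Real.sqrt ((n + 1).factorial)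
      = Real.sqrt (n + 1) * Real.sqrt n.factorial := by
    rw [Nat.factorial_succ]
    push_cast
    rw [Real.sqrt_mul (by positivity)]
  rw [Real.norm_eq_abs, Real.norm_eq_abs, abs_of_nonneg (by positivity),
    abs_of_nonneg (by positivity), hfs, pow_succ]
  have hn1 : (0:ℝ) < Real.sqrt (n + 1) := Real.sqrt_pos.mpr (by positivity)
  rw [div_le_iff₀ (by positivity)]
  have : q ^ n * q * (2 * Real.sqrt n.factorial)
      ≤ q ^ n * (Real.sqrt (n+1) * Real.sqrt n.factorial) := by
    rw [show q ^ n * q * (2 * Real.sqrt n.factorial) = q ^ n * ((2*q) * Real.sqrt n.factorial) by ring]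
    apply mul_le_mul_of_nonneg_left _ (by positivity)
    exact mul_le_mul_of_nonneg_right hsq (by positivity)
  calc q ^ n * q = (q ^ n * q * (2 * Real.sqrt n.factorial)) / (2 * Real.sqrt n.factorial) := by
        field_simp
    _ ≤ (q ^ n * (Real.sqrt (n+1) * Real.sqrt n.factorial)) / (2 * Real.sqrt n.factorial) := by
        apply div_le_div_of_nonneg_right this (by positivity)
    _ = 1 / 2 * (q ^ n / Real.sqrt n.factorial) * (Real.sqrt (n+1) * Real.sqrt n.factorial) := by
        field_simp
        try ring

lemma phi_core (Nφ : ℂ) (n : ℕ) (g : ℝ → ℂ) (hgm : MemLp (minusT g) 2 (volume : Measure ℝ)) :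
    ‖∫ x : ℝ, (starRingEnd ℂ) (g x) *
        (Nφ / ((2:ℂ) ^ n * (Real.sqrt n.factorial : ℂ))
          * ((hermiteH n (Real.sinh x) : ℝ) : ℂ) * ((Real.exp (-(Real.cosh x) ^ 2) : ℝ) : ℂ))‖
      ≤ ‖Nφ‖ * Real.pi ^ ((1:ℝ)/4) / (Real.sqrt 2 ^ n * Real.exp 1)
        * (eLpNorm (plusT g) 2 (volume : Measure ℝ)).toReal := by
  set c : ℂ := Nφ / ((2:ℂ) ^ n * (Real.sqrt n.factorial : ℂ)) with hc
  set c' : ℂ := c * ((Real.exp (-1) : ℝ) : ℂ) with hc'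
  set G : ℝ → ℂ := fun s => (starRingEnd ℂ) (plusT g s) with hGdef
  have hplus := memLp_plusT g hgm
  have hG : MemLp G 2 (volume : Measure ℝ) := by
    refine hplus.of_le
      (continuous_star.comp_aestronglyMeasurable hplus.aestronglyMeasurable) ?_
    filter_upwards with s
    rw [hGdef]
    simp
  have step1 : (∫ s : ℝ, c' * (((hP n).eval s : ℝ) : ℂ) * ((Real.exp (-s ^ 2 / 2) : ℝ) : ℂ) * G s)
      = ∫ x : ℝ, (starRingEnd ℂ) (g x) *
        (c * ((hermiteH n (Real.sinh x) : ℝ) : ℂ) * ((Real.exp (-(Real.cosh x) ^ 2) : ℝ) : ℂ)) := by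
    rw [cv_sinh]
    congr 1; funext x
    have hch : Real.sqrt (1 + Real.sinh x ^ 2) = Real.cosh x := by
      rw [← Real.cosh_sq', Real.sqrt_sq (Real.cosh_pos x).le]
    have hcosh_ne : ((Real.cosh x : ℝ) : ℂ) ≠ 0 :=
      Complex.ofReal_ne_zero.mpr (Real.cosh_pos x).ne'
    have hexp : ((Real.exp (-1) : ℝ) : ℂ) * ((Real.exp (-(Real.sinh x) ^ 2 / 2) : ℝ) : ℂ)
          * ((Real.exp (-(Real.sinh x) ^ 2 / 2) : ℝ) : ℂ)
        = ((Real.exp (-(Real.cosh x) ^ 2) : ℝ) : ℂ) := by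
      rw [← Complex.ofReal_mul, ← Complex.ofReal_mul, ← Real.exp_add, ← Real.exp_add]
      have := Real.cosh_sq' x
      congr 2
      nlinarith [this]
    have hplusval : plusT g (Real.sinh x)
        = g x * ((Real.exp (-(Real.sinh x) ^ 2 / 2) : ℝ) : ℂ) / ((Real.cosh x : ℝ) : ℂ) := by
      simp only [plusT, Real.arsinh_sinh, hch]
    rw [hGdef]
    simp only [hplusval, map_mul, map_div₀, Complex.conj_ofReal, Complex.real_smul]
    rw [hermiteH_eq]
    have hcosh_ne' : Complex.cosh (x:ℂ) ≠ 0 := by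
      rw [← Complex.ofReal_cosh]; exact hcosh_ne
    rw [hc']
    push_cast at hexp ⊢
    field_simp [hcosh_ne']
    simp only [neg_div] at hexp ⊢
    linear_combination ((starRingEnd ℂ) (g x) * ((Polynomial.eval (Real.sinh x) (hP n) : ℝ) : ℂ) * c) * hexp

  rw [show (∫ x : ℝ, (starRingEnd ℂ) (g x) *
        (Nφ / ((2:ℂ) ^ n * (Real.sqrt n.factorial : ℂ))
          * ((hermiteH n (Real.sinh x) : ℝ) : ℂ) * ((Real.exp (-(Real.cosh x) ^ 2) : ℝ) : ℂ)))
      = ∫ s : ℝ, c' * (((hP n).eval s : ℝ) : ℂ) * ((Real.exp (-s ^ 2 / 2) : ℝ) : ℂ) * G s from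
    step1.symm]
  refine le_trans (key_bound c' n G hG) (le_of_eq ?_)
  rw [show eLpNorm G 2 (volume : Measure ℝ) = eLpNorm (plusT g) 2 (volume : Measure ℝ) from
    eLpNorm_conj (plusT g)]
  congr 1
  -- ‖c'‖ * √(gInt n) = ‖Nφ‖ π^(1/4) / (√2^n * e)
  rw [sqrt_gInt]
  rw [hc', hc]
  rw [norm_mul, norm_div, norm_mul, norm_pow, Complex.norm_ofNat, Complex.norm_real,
    Complex.norm_real, Real.norm_eq_abs, Real.norm_eq_abs,
    abs_of_nonneg (Real.sqrt_nonneg _), abs_of_pos (Real.exp_pos _), Real.exp_neg]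
  have h2 : Real.sqrt 2 ^ n * Real.sqrt 2 ^ n = 2 ^ n := by
    rw [← mul_pow, Real.mul_self_sqrt (by norm_num)]
  have hfp : (0:ℝ) < Real.sqrt n.factorial := Real.sqrt_pos.mpr (by positivity)
  have hep : (0:ℝ) < Real.exp 1 := Real.exp_pos 1
  have hs2 : (0:ℝ) < Real.sqrt 2 ^ n := by positivity
  field_simp
  ring_nf
  rw [mul_comm n 2, pow_mul, Real.sq_sqrt (by norm_num : (0:ℝ) ≤ 2)]

lemma psi_core (Nψ : ℂ) (n : ℕ) (g : ℝ → ℂ) (hgm : MemLp (minusT g) 2 (volume : Measure ℝ)) :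
    ‖∫ x : ℝ, (starRingEnd ℂ) (2 * Nψ / (Real.sqrt n.factorial : ℂ)
          * ((hermiteH n (Real.sinh x) : ℝ) : ℂ) * ((Real.cosh x : ℝ) : ℂ)) * g x‖
      ≤ 2 * ‖Nψ‖ * Real.sqrt 2 ^ n * Real.pi ^ ((1:ℝ)/4)
        * (eLpNorm (minusT g) 2 (volume : Measure ℝ)).toReal := by
  set c : ℂ := (starRingEnd ℂ) (2 * Nψ / (Real.sqrt n.factorial : ℂ)) with hc
  have step1 : (∫ s : ℝ, c * (((hP n).eval s : ℝ) : ℂ) * ((Real.exp (-s ^ 2 / 2) : ℝ) : ℂ)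
        * minusT g s)
      = ∫ x : ℝ, (starRingEnd ℂ) (2 * Nψ / (Real.sqrt n.factorial : ℂ)
          * ((hermiteH n (Real.sinh x) : ℝ) : ℂ) * ((Real.cosh x : ℝ) : ℂ)) * g x := by
    rw [cv_sinh]
    congr 1; funext x
    have hminusval : minusT g (Real.sinh x)
        = g x * ((Real.exp ((Real.sinh x) ^ 2 / 2) : ℝ) : ℂ) := by
      simp only [minusT, Real.arsinh_sinh]
    have hexp : ((Real.exp (-(Real.sinh x) ^ 2 / 2) : ℝ) : ℂ)
          * ((Real.exp ((Real.sinh x) ^ 2 / 2) : ℝ) : ℂ) = 1 := by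
      rw [← Complex.ofReal_mul, ← Real.exp_add,
        show -Real.sinh x ^ 2 / 2 + Real.sinh x ^ 2 / 2 = 0 by ring, Real.exp_zero,
        Complex.ofReal_one]
    rw [hc]
    simp only [hminusval, map_mul, map_div₀, Complex.conj_ofReal, Complex.real_smul,
      hermiteH_eq, map_ofNat]
    linear_combination (((Real.cosh x : ℝ) : ℂ) * (starRingEnd ℂ) Nψ * 2
        / ((Real.sqrt n.factorial : ℝ) : ℂ) * (((hP n).eval (Real.sinh x) : ℝ) : ℂ) * g x) * hexp
  rw [← step1]
  refine le_trans (key_bound c n (minusT g) hgm) (le_of_eq ?_)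
  congr 1
  rw [sqrt_gInt, hc, RCLike.norm_conj]
  rw [norm_div, norm_mul, Complex.norm_ofNat, Complex.norm_real, Real.norm_eq_abs,
    abs_of_nonneg (Real.sqrt_nonneg _)]
  have hfp : (0:ℝ) < Real.sqrt n.factorial := Real.sqrt_pos.mpr (by positivity)
  field_simp

/-- the estimates on the compatibility forms of `g` with `φₙ, ψₙ`,
and the absolute convergence of the weak bi-coherent state series. -/
theorem stmt15 (Nφ Nψ : ℂ)
    (φ ψ : ℕ → ℝ → ℂ)
    (hφdef : ∀ n : ℕ, φ n = fun x =>
      Nφ / ((2 : ℂ) ^ n * (Real.sqrt n.factorial : ℂ))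
        * (hermiteH n (Real.sinh x) : ℂ) * (Real.exp (-(Real.cosh x) ^ 2) : ℂ))
    (hψdef : ∀ n : ℕ, ψ n = fun x =>
      2 * Nψ / (Real.sqrt n.factorial : ℂ)
        * (hermiteH n (Real.sinh x) : ℂ) * (Real.cosh x : ℂ)) :
    ∀ g ∈ Ec,
      (∀ n : ℕ, ‖∫ x : ℝ, (starRingEnd ℂ) (g x) * φ n x‖
        ≤ ‖Nφ‖ * Real.pi ^ ((1 : ℝ) / 4) / (Real.sqrt 2 ^ n * Real.exp 1)
          * (eLpNorm (plusT g) 2 (volume : Measure ℝ)).toReal) ∧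
      (∀ n : ℕ, ‖∫ x : ℝ, (starRingEnd ℂ) (ψ n x) * g x‖
        ≤ 2 * ‖Nψ‖ * Real.sqrt 2 ^ n * Real.pi ^ ((1 : ℝ) / 4)
          * (eLpNorm (minusT g) 2 (volume : Measure ℝ)).toReal) ∧
      (∀ z : ℂ, Summable (fun n : ℕ =>
        ‖((starRingEnd ℂ) z) ^ n / (Real.sqrt n.factorial : ℂ)
          * ∫ x : ℝ, (starRingEnd ℂ) (φ n x) * g x‖)) ∧
      (∀ z : ℂ, Summable (fun n : ℕ =>
        ‖((starRingEnd ℂ) z) ^ n / (Real.sqrt n.factorial : ℂ)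
          * ∫ x : ℝ, (starRingEnd ℂ) (ψ n x) * g x‖)) := by
  intro g hg
  obtain ⟨hg2, hgm⟩ := hg
  set Lp := (eLpNorm (plusT g) 2 (volume : Measure ℝ)).toReal with hLp
  set Lm := (eLpNorm (minusT g) 2 (volume : Measure ℝ)).toReal with hLm
  have hLp0 : 0 ≤ Lp := ENNReal.toReal_nonneg
  have hLm0 : 0 ≤ Lm := ENNReal.toReal_nonneg
  have part1 : ∀ n : ℕ, ‖∫ x : ℝ, (starRingEnd ℂ) (g x) * φ n x‖
      ≤ ‖Nφ‖ * Real.pi ^ ((1 : ℝ) / 4) / (Real.sqrt 2 ^ n * Real.exp 1) * Lp := by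
    intro n
    simp only [hφdef]
    exact phi_core Nφ n g hgm
  have part2 : ∀ n : ℕ, ‖∫ x : ℝ, (starRingEnd ℂ) (ψ n x) * g x‖
      ≤ 2 * ‖Nψ‖ * Real.sqrt 2 ^ n * Real.pi ^ ((1 : ℝ) / 4) * Lm := by
    intro n
    simp only [hψdef]
    exact psi_core Nψ n g hgm
  refine ⟨part1, part2, ?_, ?_⟩
  · intro z
    set D := ‖Nφ‖ * Real.pi ^ ((1 : ℝ) / 4) / Real.exp 1 * Lp with hD
    have hD0 : 0 ≤ D := by
      apply mul_nonneg _ hLp0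
      positivity
    refine Summable.of_nonneg_of_le (fun n => norm_nonneg _) (fun n => ?_)
      (((summable_aux (‖z‖ / Real.sqrt 2) (by positivity)).mul_left D))
    have hfp : (0:ℝ) < Real.sqrt n.factorial := Real.sqrt_pos.mpr (by positivity)
    have hs2 : (0:ℝ) < Real.sqrt 2 := by positivity
    calc ‖((starRingEnd ℂ) z) ^ n / (Real.sqrt n.factorial : ℂ)
          * ∫ x : ℝ, (starRingEnd ℂ) (φ n x) * g x‖
        = ‖z‖ ^ n / Real.sqrt n.factorial * ‖∫ x : ℝ, (starRingEnd ℂ) (g x) * φ n x‖ := by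
          rw [norm_mul, norm_div, norm_pow, RCLike.norm_conj, Complex.norm_real,
            Real.norm_eq_abs, abs_of_nonneg (Real.sqrt_nonneg _),
            norm_integral_conj_comm]
      _ ≤ ‖z‖ ^ n / Real.sqrt n.factorial
          * (‖Nφ‖ * Real.pi ^ ((1 : ℝ) / 4) / (Real.sqrt 2 ^ n * Real.exp 1) * Lp) :=
          mul_le_mul_of_nonneg_left (part1 n) (by positivity)
      _ = D * ((‖z‖ / Real.sqrt 2) ^ n / Real.sqrt n.factorial) := by
          rw [hD, div_pow]
          field_simp
  · intro z
    set D := 2 * ‖Nψ‖ * Real.pi ^ ((1 : ℝ) / 4) * Lm with hD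
    refine Summable.of_nonneg_of_le (fun n => norm_nonneg _) (fun n => ?_)
      (((summable_aux (‖z‖ * Real.sqrt 2) (by positivity)).mul_left D))
    have hfp : (0:ℝ) < Real.sqrt n.factorial := Real.sqrt_pos.mpr (by positivity)
    calc ‖((starRingEnd ℂ) z) ^ n / (Real.sqrt n.factorial : ℂ)
          * ∫ x : ℝ, (starRingEnd ℂ) (ψ n x) * g x‖
        = ‖z‖ ^ n / Real.sqrt n.factorial * ‖∫ x : ℝ, (starRingEnd ℂ) (ψ n x) * g x‖ := by
          rw [norm_mul, norm_div, norm_pow, RCLike.norm_conj, Complex.norm_real,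
            Real.norm_eq_abs, abs_of_nonneg (Real.sqrt_nonneg _)]
      _ ≤ ‖z‖ ^ n / Real.sqrt n.factorial
          * (2 * ‖Nψ‖ * Real.sqrt 2 ^ n * Real.pi ^ ((1 : ℝ) / 4) * Lm) :=
          mul_le_mul_of_nonneg_left (part2 n) (by positivity)
      _ = D * ((‖z‖ * Real.sqrt 2) ^ n / Real.sqrt n.factorial) := by
          rw [hD, mul_pow]
          field_simp
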